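/- Let a, b, c ∈ ℝ with a < b < 0, c > 0 and 2 < a/b < (c/(2b))² + 2. Then Δ > 0 and the real roots of f₁ are exactly 0, z₁ = c/(2b) − √Δ and z₂ = c/(2b) + √Δ; they are pairwise distinct and satisfy z₁ < z₂ < 0; moreover β₂(0)β₃(0) < 0, β₂(z₁)β₃(z₁) < 0 and β₂(z₂)β₃(z₂) > 0, i.e. the root z₂ is a node lying between two saddle-type roots (Darbouxian type D₂). -/

import Mathlib

noncomputable section

/-- `Δ = (c/(2b))² − a/b + 2`. -/
def disc (a b c : ℝ) : ℝ := (c / (2 * b)) ^ 2 - a / b + 2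

/-- The cubic `f₁(z) = b z³ − c z² + (a − 2b) z`. -/
def cubicF (a b c z : ℝ) : ℝ := b * z ^ 3 - c * z ^ 2 + (a - 2 * b) * z

/-- `β₂(z) = 2b z² − c z + (a − b)`. -/
def beta2 (a b c z : ℝ) : ℝ := 2 * b * z ^ 2 - c * z + (a - b)

/-- `β₃(z) = −3b z² + 2c z + (2b − a)`. -/
def beta3 (a b c z : ℝ) : ℝ := -3 * b * z ^ 2 + 2 * c * z + (2 * b - a)

theorem stmt2 (a b c : ℝ) (hab : a < b) (hb : b < 0) (hc : 0 < c)
    (h1 : 2 < a / b) (h2 : a / b < (c / (2 * b)) ^ 2 + 2) :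
    0 < disc a b c ∧
    ({z : ℝ | cubicF a b c z = 0} =
      {0, c / (2 * b) - Real.sqrt (disc a b c), c / (2 * b) + Real.sqrt (disc a b c)}) ∧
    (c / (2 * b) - Real.sqrt (disc a b c) ≠ 0 ∧
      c / (2 * b) + Real.sqrt (disc a b c) ≠ 0 ∧
      c / (2 * b) - Real.sqrt (disc a b c) ≠ c / (2 * b) + Real.sqrt (disc a b c)) ∧
    (c / (2 * b) - Real.sqrt (disc a b c) < c / (2 * b) + Real.sqrt (disc a b c) ∧
      c / (2 * b) + Real.sqrt (disc a b c) < 0) ∧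
    beta2 a b c 0 * beta3 a b c 0 < 0 ∧
    beta2 a b c (c / (2 * b) - Real.sqrt (disc a b c)) *
      beta3 a b c (c / (2 * b) - Real.sqrt (disc a b c)) < 0 ∧
    0 < beta2 a b c (c / (2 * b) + Real.sqrt (disc a b c)) *
      beta3 a b c (c / (2 * b) + Real.sqrt (disc a b c)) := by
  have hb0 : b ≠ 0 := ne_of_lt hb
  set m : ℝ := c / (2 * b) with hmdef
  have hm : 2 * b * m = c := by rw [hmdef]; field_simp
  have hmneg : m < 0 := div_neg_of_pos_of_neg hc (by linarith)
  have hd : 0 < disc a b c := by unfold disc; linarith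
  set s : ℝ := Real.sqrt (disc a b c) with hsdef
  have hs2 : s ^ 2 = disc a b c := Real.sq_sqrt hd.le
  have hspos : 0 < s := Real.sqrt_pos.mpr hd
  clear_value m s
  -- b * s^2 = b * m^2 - a + 2*b
  have hab' : b * (a / b) = a := by field_simp
  have key : b * s ^ 2 = b * m ^ 2 - a + 2 * b := by
    rw [hs2]; unfold disc
    rw [← hmdef]
    linear_combination -hab'
  have key' : b * m ^ 2 - b * s ^ 2 = a - 2 * b := by linarith
  have ha2b : a < 2 * b := by
    have := (lt_div_iff_of_neg hb).mp h1
    linarith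
  -- s < -m
  have hdlt : s ^ 2 < m ^ 2 := by
    rw [hs2]; unfold disc; rw [← hmdef]; linarith
  have hsm : s < -m := by
    by_contra h
    push_neg at h
    nlinarith [mul_nonneg (by linarith : (0:ℝ) ≤ s - m) (by linarith : (0:ℝ) ≤ s + m)]
  have hz2neg : m + s < 0 := by linarith
  have hz1neg : m - s < 0 := by linarith
  have hz1z2 : m - s < m + s := by linarith
  have hfac : ∀ z : ℝ, cubicF a b c z = b * z * (z - (m - s)) * (z - (m + s)) := by
    intro z
    unfold cubicF
    linear_combination z ^ 2 * hm - z * key'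
  have hb2a : beta2 a b c (m + s) = b * ((m + s) ^ 2 + 1) := by
    unfold beta2
    linear_combination (m + s) * hm - key'
  have hb2b : beta2 a b c (m - s) = b * ((m - s) ^ 2 + 1) := by
    unfold beta2
    linear_combination (m - s) * hm - key'
  have hb3a : beta3 a b c (m + s) = -2 * b * s * (m + s) := by
    unfold beta3
    linear_combination (-2) * (m + s) * hm + key'
  have hb3b : beta3 a b c (m - s) = 2 * b * s * (m - s) := by
    unfold beta3
    linear_combination (-2) * (m - s) * hm + key'
  refine ⟨hd, ?_, ?_, ⟨hz1z2, hz2neg⟩, ?_, ?_, ?_⟩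
  · ext z
    simp only [Set.mem_setOf_eq, Set.mem_insert_iff, Set.mem_singleton_iff, hfac z]
    constructor
    · intro h
      rcases mul_eq_zero.mp h with h | h
      · rcases mul_eq_zero.mp h with h | h
        · rcases mul_eq_zero.mp h with h | h
          · exact absurd h hb0
          · exact Or.inl h
        · exact Or.inr (Or.inl (by linarith [sub_eq_zero.mp h]))
      · exact Or.inr (Or.inr (by linarith [sub_eq_zero.mp h]))
    · rintro (rfl | rfl | rfl) <;> ring
  · exact ⟨ne_of_lt hz1neg, ne_of_lt hz2neg, ne_of_lt hz1z2⟩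
  · have e2 : beta2 a b c 0 = a - b := by unfold beta2; ring
    have e3 : beta3 a b c 0 = 2 * b - a := by unfold beta3; ring
    rw [e2, e3]
    exact mul_neg_of_neg_of_pos (by linarith) (by linarith)
  · rw [hb2b, hb3b]
    have t1 : 2 * b * s < 0 := mul_neg_of_neg_of_pos (by linarith) hspos
    have h1' : b * ((m - s) ^ 2 + 1) < 0 := mul_neg_of_neg_of_pos hb (by positivity)
    have h2' : 0 < 2 * b * s * (m - s) := mul_pos_of_neg_of_neg t1 hz1neg
    exact mul_neg_of_neg_of_pos h1' h2'
  · rw [hb2a, hb3a]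
    have t1 : 0 < -2 * b * s := by nlinarith
    have h1' : b * ((m + s) ^ 2 + 1) < 0 := mul_neg_of_neg_of_pos hb (by positivity)
    have h2' : -2 * b * s * (m + s) < 0 := mul_neg_of_pos_of_neg t1 hz2neg
    exact mul_pos_of_neg_of_neg h1' h2'
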